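/- Let G be a finite group with |G| = n, V a finite type, β : V → V → G → ℂ, and let L : Matrix (V × G) (V × G) ℂ be the lift matrix, L (u,g) (v,g') = β u v (g⁻¹ * g'). Let B̂ : Matrix V V ℂ denote the trivial-representation image of the base matrix, B̂ u v = Σ_{s ∈ G} β u v s, and let S := J − 2·L − 1 be the Seidel matrix of the lift (J the all-ones matrix on V × G). Then every root μ of the characteristic polynomial of S satisfies: either μ is a root of the characteristic polynomial of (n:ℂ)·J_V − 2·B̂ − 1 (J_V the all-ones matrix on V), or there exists a root λ of the characteristic polynomial of L with μ = −2·λ − 1. -/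

import Mathlib

lemma eval_charpoly_aux {m : Type} [Fintype m] [DecidableEq m] (M : Matrix m m ℂ) (t : ℂ) :
    M.charpoly.eval t = (t • (1 : Matrix m m ℂ) - M).det := by
  rw [Matrix.charpoly, ← Polynomial.coe_evalRingHom, RingHom.map_det]
  congr 1
  ext i j
  by_cases h : i = j <;>
    simp [h, Matrix.charmatrix_apply, Matrix.one_apply, Matrix.diagonal_apply]

lemma root_of_eigen_aux {m : Type} [Fintype m] [DecidableEq m] (M : Matrix m m ℂ) (t : ℂ)
    (v : m → ℂ) (hv : v ≠ 0) (h : M.mulVec v = t • v) : M.charpoly.IsRoot t := by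
  rw [Polynomial.IsRoot, eval_charpoly_aux, ← Matrix.exists_mulVec_eq_zero_iff]
  exact ⟨v, hv, by
    rw [Matrix.sub_mulVec, Matrix.smul_mulVec, Matrix.one_mulVec, h, sub_self]⟩

/-- The paper's final Lemma: apart from the eigenvalues of `n·J_V − 2·B̂ − I`, the Seidel
eigenvalues of the lift are of the form `−2λ − 1`, where `λ` is an adjacency eigenvalue of
the lift. -/
theorem seidel_spectrum_of_lift (G : Type) [Group G] [Fintype G] [DecidableEq G]
    (n : ℕ) (hn : Fintype.card G = n)
    (V : Type) [Fintype V] [Nonempty V] [DecidableEq V]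
    (β : V → V → G → ℂ)
    (L : Matrix (V × G) (V × G) ℂ)
    (hL : ∀ (u v : V) (g g' : G), L (u, g) (v, g') = β u v (g⁻¹ * g'))
    (Bhat : Matrix V V ℂ) (hBhat : ∀ u v : V, Bhat u v = ∑ s : G, β u v s)
    (J : Matrix (V × G) (V × G) ℂ) (hJ : ∀ p q : V × G, J p q = 1)
    (S : Matrix (V × G) (V × G) ℂ)
    (hS : S = J - 2 • L - (1 : Matrix (V × G) (V × G) ℂ))
    (JV : Matrix V V ℂ) (hJV : ∀ u v : V, JV u v = 1)
    (μ : ℂ) (hμ : S.charpoly.IsRoot μ) :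
    ((n : ℂ) • JV - 2 • Bhat - (1 : Matrix V V ℂ)).charpoly.IsRoot μ ∨
      ∃ lam : ℂ, L.charpoly.IsRoot lam ∧ μ = -2 * lam - 1 := by
  -- extract an eigenvector of S
  rw [Polynomial.IsRoot, eval_charpoly_aux, ← Matrix.exists_mulVec_eq_zero_iff] at hμ
  obtain ⟨v, hv0, hv⟩ := hμ
  rw [Matrix.sub_mulVec, Matrix.smul_mulVec, Matrix.one_mulVec, sub_eq_zero] at hv
  have hSv : S.mulVec v = μ • v := hv.symm
  set y : V → ℂ := fun u => ∑ g : G, v (u, g) with hy_def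
  set T : ℂ := ∑ w : V, y w with hT_def
  have hTsum : ∑ q : V × G, v q = T := by
    rw [hT_def, Fintype.sum_prod_type]
  -- entrywise formula for S.mulVec v
  have hSform : ∀ p : V × G, (S.mulVec v) p = T - 2 * (L.mulVec v) p - v p := by
    intro p
    rw [hS, Matrix.sub_mulVec, Matrix.sub_mulVec, Matrix.one_mulVec]
    have h2 : ((2 • L).mulVec v) p = 2 * (L.mulVec v) p := by
      have : (2 • L).mulVec v = (2 : ℕ) • L.mulVec v := Matrix.smul_mulVec 2 L v
      rw [this]; simp
    have hJv : (J.mulVec v) p = T := by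
      simp only [Matrix.mulVec, dotProduct, hJ, one_mul]
      exact hTsum
    simp only [Pi.sub_apply, h2, hJv]
  -- the key sum computation: ∑_h (L.mulVec v)(u,h) = ∑_w Bhat u w * y w
  have hLsum : ∀ u : V, ∑ h : G, (L.mulVec v) (u, h) = ∑ w : V, Bhat u w * y w := by
    intro u
    have : ∀ h : G, (L.mulVec v) (u, h) = ∑ w : V, ∑ k : G, β u w (h⁻¹ * k) * v (w, k) := by
      intro h
      simp only [Matrix.mulVec, dotProduct, Fintype.sum_prod_type]
      exact Finset.sum_congr rfl fun w _ => Finset.sum_congr rfl fun k _ => by rw [hL]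
    simp only [this]
    rw [Finset.sum_comm]
    refine Finset.sum_congr rfl fun w _ => ?_
    rw [Finset.sum_comm]
    have : ∀ k : G, ∑ h : G, β u w (h⁻¹ * k) * v (w, k) = Bhat u w * v (w, k) := by
      intro k
      rw [← Finset.sum_mul, hBhat]
      congr 1
      exact Fintype.sum_equiv ((Equiv.inv G).trans (Equiv.mulRight k))
        (fun h => β u w (h⁻¹ * k)) (β u w) (fun _ => rfl)
    simp only [this]
    rw [← Finset.mul_sum]
  by_cases hy : y = 0
  · -- y = 0 : v is an eigenvector of L for eigenvalue (-1-μ)/2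
    right
    have hT0 : T = 0 := by simp [hT_def, hy]
    refine ⟨(-1 - μ) / 2, root_of_eigen_aux L _ v hv0 ?_, by ring⟩
    funext p
    have h1 : μ * v p = T - 2 * (L.mulVec v) p - v p := by
      rw [← hSform p, hSv]; rfl
    rw [hT0] at h1
    have : (L.mulVec v) p = ((-1 - μ) / 2) * v p := by linear_combination h1 / 2
    simpa using this
  · -- y ≠ 0 : y is an eigenvector of n•JV - 2•Bhat - 1 for eigenvalue μ
    left
    refine root_of_eigen_aux _ μ y hy ?_
    funext u
    have key : μ * y u = ∑ h : G, (S.mulVec v) (u, h) := by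
      rw [hSv, hy_def]
      simp [Finset.mul_sum]
    rw [Finset.sum_congr rfl (fun h _ => hSform (u, h))] at key
    have hsum : ∑ h : G, (T - 2 * (L.mulVec v) (u, h) - v (u, h))
        = (n : ℂ) * T - 2 * (∑ w : V, Bhat u w * y w) - y u := by
      rw [Finset.sum_sub_distrib, Finset.sum_sub_distrib, Finset.sum_const,
        ← Finset.mul_sum, hLsum u]
      simp [hn, hy_def]
    rw [hsum] at key
    have hM : ((( n : ℂ) • JV - 2 • Bhat - (1 : Matrix V V ℂ)).mulVec y) u
        = (n : ℂ) * T - 2 * (∑ w : V, Bhat u w * y w) - y u := by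
      rw [Matrix.sub_mulVec, Matrix.sub_mulVec, Matrix.one_mulVec, Matrix.smul_mulVec]
      have h2 : ((2 • Bhat).mulVec y) u = 2 * ((Bhat.mulVec y) u) := by
        have : (2 • Bhat).mulVec y = (2 : ℕ) • Bhat.mulVec y := Matrix.smul_mulVec 2 Bhat y
        rw [this]; simp
      have hJVy : (JV.mulVec y) u = T := by
        simp only [Matrix.mulVec, dotProduct, hJV, one_mul]
        exact hT_def.symm
      have hBy : (Bhat.mulVec y) u = ∑ w : V, Bhat u w * y w := rfl
      simp only [Pi.sub_apply, Pi.smul_apply, smul_eq_mul, h2, hJVy, hBy]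
    rw [Pi.smul_apply, smul_eq_mul, hM, key]
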